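/- For every natural number k and every pair of integers a, b with b ≥ a + 2k + 2 and a ≥ 2, there exists a bipartite digraph D with colour classes X, Y of cardinalities a and b such that d^+(u) + d^-(v) ≥ a + k + 1 for every pair of non-neighbouring vertices u, v from opposite colour classes, yet D contains no oriented cycle of length 2a. (Take D to be the disjoint union of the complete bipartite digraphs K*_{1,k+2} and K*_{a−1,b−k−2}.) -/

import Mathlib

open Finset

/-- Out-degree of a vertex in the digraph with arc relation `A`. -/
def outDeg {V : Type*} [Fintype V] (A : V → V → Prop) [DecidableRel A] (v : V) : ℕ :=
  (Finset.univ.filter (fun w => A v w)).card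

/-- In-degree of a vertex. -/
def inDeg {V : Type*} [Fintype V] (A : V → V → Prop) [DecidableRel A] (v : V) : ℕ :=
  (Finset.univ.filter (fun w => A w v)).card

/-- Number of out-neighbours of `v` lying in the set `S`. -/
def outDegOn {V : Type*} (A : V → V → Prop) [DecidableRel A] (S : Finset V) (v : V) : ℕ :=
  (S.filter (fun w => A v w)).card

/-- Number of in-neighbours of `v` lying in the set `S`. -/
def inDegOn {V : Type*} (A : V → V → Prop) [DecidableRel A] (S : Finset V) (v : V) : ℕ :=
  (S.filter (fun w => A w v)).card

/-- `D = (V, A)` is bipartite with colour classes `X`, `Y`. -/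
def IsBipartite {V : Type*} (A : V → V → Prop) (X Y : Finset V) : Prop :=
  Disjoint X Y ∧ (∀ v : V, v ∈ X ∨ v ∈ Y) ∧
    ∀ u v : V, A u v → (u ∈ X ∧ v ∈ Y) ∨ (u ∈ Y ∧ v ∈ X)

/-- An oriented path on `s` vertices `p 0, p 1, …, p (s-1)`. -/
def IsPath {V : Type*} (A : V → V → Prop) (s : ℕ) (p : ℕ → V) : Prop :=
  Set.InjOn p (Set.Iio s) ∧ ∀ i : ℕ, i + 1 < s → A (p i) (p (i + 1))

/-- An oriented cycle on `s` distinct vertices `p 0, …, p (s-1)` (indices mod `s`). -/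
def IsCycle {V : Type*} (A : V → V → Prop) (s : ℕ) (p : ℕ → V) : Prop :=
  Set.InjOn p (Set.Iio s) ∧ ∀ i : ℕ, i < s → A (p i) (p ((i + 1) % s))

/-- `M` is a matching from `X` to `Y`: an independent set of arcs with origin in `X`
and terminus in `Y`. -/
def IsMatching {V : Type*} (A : V → V → Prop) (X Y : Finset V) (M : Finset (V × V)) : Prop :=
  (∀ e ∈ M, e.1 ∈ X ∧ e.2 ∈ Y ∧ A e.1 e.2) ∧
    ∀ e ∈ M, ∀ e' ∈ M, e ≠ e' → e.1 ≠ e'.1 ∧ e.2 ≠ e'.2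

/-- A complete matching from `X` to `Y`: a matching consisting of `|X|` arcs. -/
def IsCompleteMatching {V : Type*} (A : V → V → Prop) (X Y : Finset V)
    (M : Finset (V × V)) : Prop :=
  IsMatching A X Y M ∧ M.card = X.card

/-- The path `p 0, …, p (s-1)` is compatible with the matching `M`: its arcs lie
alternately in `M` and outside `M`. -/
def PathCompat {V : Type*} (M : Finset (V × V)) (s : ℕ) (p : ℕ → V) : Prop :=
  ∀ i : ℕ, i + 2 < s → ((p i, p (i + 1)) ∈ M ↔ (p (i + 1), p (i + 2)) ∉ M)

/-- The cycle `p 0, …, p (s-1)` is compatible with the matching `M`. -/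
def CycleCompat {V : Type*} (M : Finset (V × V)) (s : ℕ) (p : ℕ → V) : Prop :=
  ∀ i : ℕ, i < s →
    ((p i, p ((i + 1) % s)) ∈ M ↔ (p ((i + 1) % s), p ((i + 2) % s)) ∉ M)

/-- The path `p 0, …, p (s-1)` avoids the vertex set `S`. -/
def Avoids {V : Type*} (s : ℕ) (p : ℕ → V) (S : Finset V) : Prop :=
  ∀ i : ℕ, i < s → p i ∉ S

def pred7 (a k : ℕ) {n : ℕ} (u v : Fin n) : Prop :=
  (u.val = 0 ∧ a ≤ v.val ∧ v.val < a + k + 2) ∨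
  (a ≤ u.val ∧ u.val < a + k + 2 ∧ v.val = 0) ∨
  (1 ≤ u.val ∧ u.val < a ∧ a + k + 2 ≤ v.val) ∨
  (a + k + 2 ≤ u.val ∧ 1 ≤ v.val ∧ v.val < a)

instance pred7.dec (a k : ℕ) {n : ℕ} (u v : Fin n) : Decidable (pred7 a k u v) := by
  unfold pred7; exact inferInstance

lemma pred7_symm (a k : ℕ) {n : ℕ} (u v : Fin n) : pred7 a k u v ↔ pred7 a k v u := by
  unfold pred7; tauto

lemma card_filter_Ico (n c d : ℕ) (hd : d ≤ n) :
    ((Finset.univ : Finset (Fin n)).filter (fun v => c ≤ v.val ∧ v.val < d)).card = d - c := by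
  have h : ∀ m ∈ Finset.Ico c d, m < n := fun m hm => lt_of_lt_of_le (Finset.mem_Ico.mp hm).2 hd
  have he : (Finset.univ : Finset (Fin n)).filter (fun v => c ≤ v.val ∧ v.val < d)
      = (Finset.Ico c d).attachFin h := by
    ext v; simp [Finset.mem_attachFin]
  rw [he, Finset.card_attachFin, Nat.card_Ico]
theorem stmt_7 (k a b : ℕ) (ha : 2 ≤ a) (hb : a + 2 * k + 2 ≤ b) :
    ∃ (Arcs : Finset (Fin (a + b) × Fin (a + b))) (X Y : Finset (Fin (a + b))),
      X.card = a ∧ Y.card = b ∧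
      IsBipartite (fun u v => (u, v) ∈ Arcs) X Y ∧
      (∀ u v : Fin (a + b), ((u ∈ X ∧ v ∈ Y) ∨ (u ∈ Y ∧ v ∈ X)) →
        (u, v) ∉ Arcs →
        a + k + 1 ≤ outDeg (fun x w => (x, w) ∈ Arcs) u +
          inDeg (fun x w => (x, w) ∈ Arcs) v) ∧
      ¬ ∃ p : ℕ → Fin (a + b), IsCycle (fun u v => (u, v) ∈ Arcs) (2 * a) p := by
  classical
  refine ⟨(Finset.univ ×ˢ Finset.univ).filter (fun e => pred7 a k e.1 e.2),
    Finset.univ.filter (fun v => v.val < a),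
    Finset.univ.filter (fun v => a ≤ v.val), ?_, ?_, ?_, ?_, ?_⟩
  · -- X.card = a
    have he : (Finset.univ : Finset (Fin (a+b))).filter (fun v => v.val < a)
        = Finset.univ.filter (fun v => 0 ≤ v.val ∧ v.val < a) := by
      ext v; simp
    rw [he, card_filter_Ico _ _ _ (by omega)]
    omega
  · -- Y.card = b
    have he : (Finset.univ : Finset (Fin (a+b))).filter (fun v => a ≤ v.val)
        = Finset.univ.filter (fun v => a ≤ v.val ∧ v.val < a + b) := by
      ext v; simp [v.isLt]
    rw [he, card_filter_Ico _ _ _ (by omega)]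
    omega
  · -- bipartite
    refine ⟨?_, ?_, ?_⟩
    · rw [Finset.disjoint_left]
      intro v hv hv'
      simp only [Finset.mem_filter] at hv hv'
      omega
    · intro v
      simp only [Finset.mem_filter, Finset.mem_univ, true_and]
      omega
    · intro u v huv
      simp only [Finset.mem_filter, Finset.mem_product, Finset.mem_univ, true_and] at huv
      simp only [Finset.mem_filter, Finset.mem_univ, true_and]
      unfold pred7 at huv
      omega
  · -- degree condition
    intro u v hside hnadj
    have hmem : ∀ x w : Fin (a+b),
        ((x, w) ∈ (Finset.univ ×ˢ Finset.univ).filter (fun e : Fin (a+b) × Fin (a+b) => pred7 a k e.1 e.2))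
        ↔ pred7 a k x w := by
      intro x w; simp
    have hout : ∀ x : Fin (a+b),
        outDeg (fun x w => (x, w) ∈ (Finset.univ ×ˢ Finset.univ).filter
          (fun e : Fin (a+b) × Fin (a+b) => pred7 a k e.1 e.2)) x
        = (Finset.univ.filter (fun w : Fin (a+b) => pred7 a k x w)).card := by
      intro x
      unfold outDeg
      congr 1
      ext w
      simp [hmem]
    have hin : ∀ x : Fin (a+b),
        inDeg (fun x w => (x, w) ∈ (Finset.univ ×ˢ Finset.univ).filter
          (fun e : Fin (a+b) × Fin (a+b) => pred7 a k e.1 e.2)) x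
        = (Finset.univ.filter (fun w : Fin (a+b) => pred7 a k x w)).card := by
      intro x
      unfold inDeg
      congr 1
      ext w
      simp [hmem, pred7_symm a k w x]
    have dval : ∀ x : Fin (a+b),
        (Finset.univ.filter (fun w : Fin (a+b) => pred7 a k x w)).card
        = if x.val = 0 then k + 2 else if x.val < a then a + b - (a + k + 2)
          else if x.val < a + k + 2 then 1 else a - 1 := by
      intro x
      split_ifs with h1 h2 h3
      · have he : Finset.univ.filter (fun w : Fin (a+b) => pred7 a k x w)
            = Finset.univ.filter (fun w : Fin (a+b) => a ≤ w.val ∧ w.val < a + k + 2) := by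
          ext w; simp only [Finset.mem_filter, Finset.mem_univ, true_and]; unfold pred7; omega
        rw [he, card_filter_Ico _ _ _ (by omega)]; omega
      · have he : Finset.univ.filter (fun w : Fin (a+b) => pred7 a k x w)
            = Finset.univ.filter (fun w : Fin (a+b) => a + k + 2 ≤ w.val ∧ w.val < a + b) := by
          ext w
          simp only [Finset.mem_filter, Finset.mem_univ, true_and]
          unfold pred7
          have := w.isLt
          omega
        rw [he, card_filter_Ico _ _ _ (by omega)]
      · have he : Finset.univ.filter (fun w : Fin (a+b) => pred7 a k x w)
            = Finset.univ.filter (fun w : Fin (a+b) => 0 ≤ w.val ∧ w.val < 1) := by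
          ext w; simp only [Finset.mem_filter, Finset.mem_univ, true_and]; unfold pred7; omega
        rw [he, card_filter_Ico _ _ _ (by omega)]
      · have he : Finset.univ.filter (fun w : Fin (a+b) => pred7 a k x w)
            = Finset.univ.filter (fun w : Fin (a+b) => 1 ≤ w.val ∧ w.val < a) := by
          ext w; simp only [Finset.mem_filter, Finset.mem_univ, true_and]; unfold pred7; omega
        rw [he, card_filter_Ico _ _ _ (by omega)]
    rw [hout, hin, dval, dval]
    rw [hmem] at hnadj
    unfold pred7 at hnadj
    simp only [Finset.mem_filter, Finset.mem_univ, true_and] at hside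
    split_ifs <;> omega
  · -- no cycle of length 2a
    rintro ⟨p, hinj, harc⟩
    have hmem : ∀ x w : Fin (a+b),
        ((x, w) ∈ (Finset.univ ×ˢ Finset.univ).filter (fun e : Fin (a+b) × Fin (a+b) => pred7 a k e.1 e.2))
        ↔ pred7 a k x w := by
      intro x w; simp
    have step : ∀ i : ℕ, i + 1 < 2 * a →
        (((p (i+1)).val < a ↔ ¬ ((p i).val < a)) ∧
         (((p (i+1)).val = 0 ∨ (a ≤ (p (i+1)).val ∧ (p (i+1)).val < a + k + 2)) ↔
          ((p i).val = 0 ∨ (a ≤ (p i).val ∧ (p i).val < a + k + 2)))) := by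
      intro i hi
      have h := harc i (by omega)
      rw [Nat.mod_eq_of_lt hi, hmem] at h
      unfold pred7 at h
      omega
    have key : ∀ i : ℕ, i < 2 * a →
        (((p i).val < a ↔ ((p 0).val < a ↔ i % 2 = 0)) ∧
         (((p i).val = 0 ∨ (a ≤ (p i).val ∧ (p i).val < a + k + 2)) ↔
          ((p 0).val = 0 ∨ (a ≤ (p 0).val ∧ (p 0).val < a + k + 2)))) := by
      intro i
      induction i with
      | zero => intro _; constructor <;> tauto
      | succ j ih =>
        intro hj
        have h1 := ih (by omega)
        have h2 := step j hj
        obtain ⟨h1a, h1b⟩ := h1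
        obtain ⟨h2a, h2b⟩ := h2
        exact ⟨by omega, by omega⟩
    -- case split on component of p 0
    by_cases hc : (p 0).val = 0 ∨ (a ≤ (p 0).val ∧ (p 0).val < a + k + 2)
    · -- small component: the X-side has only the vertex 0
      have hzero : ∀ i : ℕ, i < 2 * a → (p i).val < a → (p i).val = 0 := by
        intro i hi hlt
        have := (key i hi).2.mpr hc
        omega
      obtain ⟨i1, i2, hi1, hi2, hne, h1, h2⟩ :
          ∃ i1 i2 : ℕ, i1 < 2 * a ∧ i2 < 2 * a ∧ i1 ≠ i2 ∧ (p i1).val < a ∧ (p i2).val < a := by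
        by_cases h0 : (p 0).val < a
        · exact ⟨0, 2, by omega, by omega, by omega,
            (key 0 (by omega)).1.mpr (by tauto), (key 2 (by omega)).1.mpr (by omega)⟩
        · refine ⟨1, 3, by omega, by omega, by omega, ?_, ?_⟩
          · exact (key 1 (by omega)).1.mpr (by omega)
          · exact (key 3 (by omega)).1.mpr (by omega)
      have : p i1 = p i2 := by
        have e1 := hzero i1 hi1 h1
        have e2 := hzero i2 hi2 h2
        exact Fin.ext (by omega)
      exact hne (hinj (Set.mem_Iio.mpr hi1) (Set.mem_Iio.mpr hi2) this)
    · -- big component: the X-side has a-1 vertices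
      set g : ℕ → ℕ := fun j => if (p 0).val < a then 2 * j else 2 * j + 1 with hg
      have hglt : ∀ j : ℕ, j < a → g j < 2 * a := by
        intro j hj; simp only [hg]; split_ifs <;> omega
      have hgx : ∀ j : ℕ, j < a → 1 ≤ (p (g j)).val ∧ (p (g j)).val < a := by
        intro j hj
        have hlt : (p (g j)).val < a := by
          by_cases h0 : (p 0).val < a
          · have : g j = 2 * j := by simp [hg, h0]
            rw [this]
            exact (key (2*j) (by omega)).1.mpr (by omega)
          · have : g j = 2 * j + 1 := by simp [hg, h0]
            rw [this]
            exact (key (2*j+1) (by omega)).1.mpr (by omega)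
        have hnc : ¬ ((p (g j)).val = 0 ∨ (a ≤ (p (g j)).val ∧ (p (g j)).val < a + k + 2)) := by
          intro h
          exact hc ((key (g j) (hglt j hj)).2.mp h)
        omega
      have hcard : (Finset.range a).card ≤ (Finset.Ico 1 a).card := by
        apply Finset.card_le_card_of_injOn (fun j => (p (g j)).val)
        · intro j hj
          rw [Finset.mem_coe, Finset.mem_range] at hj
          rw [Finset.mem_coe, Finset.mem_Ico]
          exact hgx j hj
        · intro j1 hj1 j2 hj2 hEq
          rw [Finset.mem_coe, Finset.mem_range] at hj1 hj2
          have hpe : p (g j1) = p (g j2) := Fin.ext hEq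
          have := hinj (Set.mem_Iio.mpr (hglt j1 hj1)) (Set.mem_Iio.mpr (hglt j2 hj2)) hpe
          simp only [hg] at this
          split_ifs at this <;> omega
      rw [Finset.card_range, Nat.card_Ico] at hcard
      omega
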